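/- Fix a finite metric space on n points with a chosen number of clusters k, and suppose d^α-sampling is run with a fixed randomness vector Z ∈ [0,1]^k. Then the number of values of α ∈ [0,∞) at which the output sequence of centers changes (i.e., the number of discontinuities of α ↦ seed_α(V, Z)) is at most O(min(n^{k+3}, n² · 2^n)). -/

import Mathlib

open Finset


/-- Minimum distance from `v` to the centers chosen before round `t`. -/
noncomputable def dminC {n k : ℕ} (dist : Fin n → Fin n → ℝ) (σ : Fin k → Fin n)
    (t : Fin k) (v : Fin n) : ℝ :=
  sInf {r : ℝ | ∃ s : Fin k, s < t ∧ r = dist v (σ s)}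

/-- Sampling weight of point `v` in round `t` of `d^α`-sampling (uniform in round 0). -/
noncomputable def wgt {n k : ℕ} (dist : Fin n → Fin n → ℝ) (σ : Fin k → Fin n)
    (α : ℝ) (t : Fin k) (v : Fin n) : ℝ :=
  if (t : ℕ) = 0 then 1 else dminC dist σ t v ^ α

/-- `σ` is the sequence of centers output by the deterministic version of
`d^α`-sampling with randomness vector `Z`: in each round `t`, `[0,1]` is partitioned
into intervals with widths proportional to the weights, and the chosen center is the
point whose interval contains `Z t`. -/
def SeedSpec {n k : ℕ} (dist : Fin n → Fin n → ℝ) (α : ℝ) (Z : Fin k → ℝ)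
    (σ : Fin k → Fin n) : Prop :=
  ∀ t : Fin k,
    (∑ j ∈ Finset.univ.filter (fun j => j < σ t), wgt dist σ α t j)
      ≤ Z t * ∑ j, wgt dist σ α t j ∧
    Z t * ∑ j, wgt dist σ α t j
      < ∑ j ∈ Finset.univ.filter (fun j => j ≤ σ t), wgt dist σ α t j


/-- An exponential sum with distinct frequencies and some nonzero coefficient has
fewer roots than terms. -/
theorem expsum_aux : ∀ (m : ℕ) (T : Finset ℝ) (a : ℝ → ℝ), T.card = m →
    (∃ b ∈ T, a b ≠ 0) → ∀ s : Finset ℝ,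
    (∀ x ∈ s, ∑ b ∈ T, a b * Real.exp (b * x) = 0) → s.card < m := by
  intro m
  induction m with
  | zero =>
    intro T a hT hne s hs
    obtain ⟨b, hb, _⟩ := hne
    rw [Finset.card_eq_zero] at hT
    simp [hT] at hb
  | succ m ih =>
    intro T a hT hne s hs
    obtain ⟨b0, hb0T, hab0⟩ := hne
    set g : ℝ → ℝ := fun x => ∑ b ∈ T, a b * Real.exp ((b - b0) * x) with hg
    have hgf : ∀ x, g x = (∑ b ∈ T, a b * Real.exp (b * x)) * Real.exp (-b0 * x) := by
      intro x
      rw [Finset.sum_mul]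
      refine Finset.sum_congr rfl fun b _ => ?_
      rw [mul_assoc, ← Real.exp_add]
      ring_nf
    have hroots : ∀ x ∈ s, g x = 0 := by
      intro x hx
      rw [hgf, hs x hx, zero_mul]
    by_cases hz : ∀ b ∈ T.erase b0, a b = 0
    · have hse : s = ∅ := by
        by_contra hne'
        obtain ⟨x, hx⟩ := Finset.nonempty_iff_ne_empty.mpr hne'
        have h0 := hs x hx
        have : ∑ b ∈ T, a b * Real.exp (b * x) = a b0 * Real.exp (b0 * x) := by
          refine Finset.sum_eq_single_of_mem b0 hb0T fun b hb hbne => ?_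
          rw [hz b (Finset.mem_erase.mpr ⟨hbne, hb⟩), zero_mul]
        rw [this] at h0
        exact hab0 ((mul_eq_zero.mp h0).resolve_right (Real.exp_ne_zero _))
      simp [hse]
    · push_neg at hz
      obtain ⟨b1, hb1e, hab1⟩ := hz
      -- derivative data
      set T' : Finset ℝ := (T.erase b0).image (fun b => b - b0) with hT'
      set a' : ℝ → ℝ := fun y => a (y + b0) * y with ha'
      have hsubinj : Function.Injective (fun b : ℝ => b - b0) :=
        fun x y h => by simpa using congrArg (· + b0) h
      have hT'card : T'.card = m := by
        rw [hT', Finset.card_image_of_injective _ hsubinj, Finset.card_erase_of_mem hb0T, hT]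
        rfl
      have hne' : ∃ y ∈ T', a' y ≠ 0 := by
        refine ⟨b1 - b0, Finset.mem_image_of_mem _ hb1e, ?_⟩
        have hb1ne : b1 ≠ b0 := (Finset.mem_erase.mp hb1e).1
        simp only [ha', sub_add_cancel]
        exact mul_ne_zero hab1 (sub_ne_zero.mpr hb1ne)
      have hD : ∀ x : ℝ, HasDerivAt g (∑ y ∈ T', a' y * Real.exp (y * x)) x := by
        intro x
        have h1 : HasDerivAt g (∑ b ∈ T, a b * (Real.exp ((b - b0) * x) * (b - b0))) x := by
          apply HasDerivAt.fun_sum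
          intro b _
          have := (((hasDerivAt_id x).const_mul (b - b0)).exp).const_mul (a b)
          simpa using this
        convert h1 using 1
        rw [show ∑ y ∈ T', a' y * Real.exp (y * x)
            = ∑ b ∈ T.erase b0, a' (b - b0) * Real.exp ((b - b0) * x) from
          Finset.sum_image (fun x _ y _ h => hsubinj h)]
        rw [← Finset.sum_erase_add T _ hb0T]
        simp only [ha', sub_add_cancel, sub_self, mul_zero, zero_mul, add_zero]
        exact Finset.sum_congr rfl fun b _ => by ring
      rcases Nat.eq_zero_or_pos s.card with hsc | hsc
      · omega
      · have hM : s.Nonempty := Finset.card_pos.mp hsc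
        set s0 := s.erase (s.max' hM) with hs0
        have hs0card : s0.card = s.card - 1 := Finset.card_erase_of_mem (s.max'_mem hM)
        classical
        set nx : ℝ → ℝ := fun x =>
          if h : (s.filter (fun y => x < y)).Nonempty then (s.filter (fun y => x < y)).min' h
          else 0 with hnx
        have hfilne : ∀ x ∈ s0, (s.filter (fun y => x < y)).Nonempty := by
          intro x hx
          refine ⟨s.max' hM, Finset.mem_filter.mpr ⟨s.max'_mem hM, ?_⟩⟩
          exact lt_of_le_of_ne (s.le_max' x (Finset.mem_of_mem_erase hx))
            (Finset.ne_of_mem_erase hx)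
        have hnx_mem : ∀ x ∈ s0, nx x ∈ s ∧ x < nx x := by
          intro x hx
          have h := hfilne x hx
          have hmem := (s.filter (fun y => x < y)).min'_mem h
          rw [Finset.mem_filter] at hmem
          simp only [hnx, dif_pos h]
          exact hmem
        have hnx_le : ∀ x ∈ s0, ∀ y ∈ s, x < y → nx x ≤ y := by
          intro x hx y hy hxy
          have h := hfilne x hx
          simp only [hnx, dif_pos h]
          exact Finset.min'_le _ _ (Finset.mem_filter.mpr ⟨hy, hxy⟩)
        have hcontg : Continuous g := by
          apply continuous_finset_sum
          intro b _
          exact continuous_const.mul (Real.continuous_exp.comp (continuous_const.mul continuous_id))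
        have H : ∀ x ∈ s0, ∃ y, (x < y ∧ y < nx x) ∧
            ∑ b ∈ T', a' b * Real.exp (b * y) = 0 := by
          intro x hx
          have hxs : x ∈ s := Finset.mem_of_mem_erase hx
          have hlt : x < nx x := (hnx_mem x hx).2
          have hI : g x = g (nx x) := by
            rw [hroots x hxs, hroots (nx x) (hnx_mem x hx).1]
          obtain ⟨c, hc, hc0⟩ := exists_hasDerivAt_eq_zero hlt hcontg.continuousOn hI
            (fun y _ => hD y)
          exact ⟨c, ⟨hc.1, hc.2⟩, hc0⟩
        choose! Y hY using H
        have hmono : ∀ x1 ∈ s0, ∀ x2 ∈ s0, x1 < x2 → Y x1 < Y x2 := by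
          intro x1 h1 x2 h2 h12
          have := (hY x1 h1).1
          have h2s : x2 ∈ s := Finset.mem_of_mem_erase h2
          have : Y x1 < nx x1 := (hY x1 h1).1.2
          have hle : nx x1 ≤ x2 := hnx_le x1 h1 x2 h2s h12
          have := (hY x2 h2).1.1
          linarith [(hY x1 h1).1.2]
        have hinj : Set.InjOn Y s0 := by
          intro x1 h1 x2 h2 heq
          rcases lt_trichotomy x1 x2 with h | h | h
          · exact absurd (hmono x1 h1 x2 h2 h) (by rw [heq]; exact lt_irrefl _)
          · exact h
          · exact absurd (hmono x2 h2 x1 h1 h) (by rw [heq]; exact lt_irrefl _)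
        have hcard' : (s0.image Y).card = s.card - 1 := by
          rw [Finset.card_image_of_injOn hinj, hs0card]
        have hlt' : (s0.image Y).card < m := by
          apply ih T' a' hT'card hne'
          intro y hy
          obtain ⟨x, hx, rfl⟩ := Finset.mem_image.mp hy
          exact (hY x hx).2
        omega

/-- Root-set version of `expsum_aux`. -/
theorem root_set_bound (T : Finset ℝ) (a : ℝ → ℝ) (hne : ∃ b ∈ T, a b ≠ 0) :
    ∃ F : Finset ℝ, {x : ℝ | ∑ b ∈ T, a b * Real.exp (b * x) = 0} ⊆ ↑F ∧ F.card ≤ T.card := by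
  set R := {x : ℝ | ∑ b ∈ T, a b * Real.exp (b * x) = 0} with hR
  have key : ∀ s : Finset ℝ, ↑s ⊆ R → s.card < T.card := fun s hs =>
    expsum_aux T.card T a rfl hne s (fun x hx => hs hx)
  have hfin : R.Finite := by
    by_contra h
    obtain ⟨t, ht, htc⟩ := Set.Infinite.exists_subset_card_eq h T.card
    exact absurd (key t ht) (by omega)
  refine ⟨hfin.toFinset, by simp, ?_⟩
  exact le_of_lt (key hfin.toFinset (by simp))

noncomputable def dCf {n : ℕ} (dist : Fin n → Fin n → ℝ) (C : Finset (Fin n)) (v : Fin n) : ℝ :=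
  sInf {r : ℝ | ∃ c ∈ C, r = dist v c}

lemma dCf_nonneg {n : ℕ} {dist : Fin n → Fin n → ℝ} (hnn : ∀ v u, 0 ≤ dist v u)
    (C : Finset (Fin n)) (v : Fin n) : 0 ≤ dCf dist C v := by
  apply Real.sInf_nonneg
  rintro r ⟨c, _, rfl⟩
  exact hnn _ _

lemma dCf_le {n : ℕ} {dist : Fin n → Fin n → ℝ} (hnn : ∀ v u, 0 ≤ dist v u)
    {C : Finset (Fin n)} {c : Fin n} (hc : c ∈ C) (v : Fin n) : dCf dist C v ≤ dist v c := by
  refine csInf_le ⟨0, ?_⟩ ⟨c, hc, rfl⟩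
  rintro r ⟨c', _, rfl⟩
  exact hnn _ _

lemma dminC_eq_dCf {n k : ℕ} (dist : Fin n → Fin n → ℝ) (σ : Fin k → Fin n) (t : Fin k)
    (v : Fin n) :
    dminC dist σ t v = dCf dist ((Finset.univ.filter (fun s => s < t)).image σ) v := by
  unfold dminC dCf
  congr 1
  ext r
  simp only [Set.mem_setOf_eq, Finset.mem_image, Finset.mem_filter, Finset.mem_univ, true_and]
  constructor
  · rintro ⟨s, hs, rfl⟩; exact ⟨σ s, ⟨s, hs, rfl⟩, rfl⟩
  · rintro ⟨c, ⟨s, hs, rfl⟩, rfl⟩; exact ⟨s, hs, rfl⟩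

lemma wgt_eq_rpow {n k : ℕ} (dist : Fin n → Fin n → ℝ) (σ : Fin k → Fin n) {t : Fin k}
    (ht : (t : ℕ) ≠ 0) (β : ℝ) (v : Fin n) :
    wgt dist σ β t v = dCf dist ((Finset.univ.filter (fun s => s < t)).image σ) v ^ β := by
  simp [wgt, ht, dminC_eq_dCf]

lemma filter_le_eq_insert {n : ℕ} (i : Fin n) :
    Finset.univ.filter (fun j => j ≤ i) = insert i (Finset.univ.filter (fun j => j < i)) := by
  ext j
  simp [le_iff_lt_or_eq, or_comm]

lemma card_filter_lt_fin {k : ℕ} (t : Fin k) :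
    (Finset.univ.filter (fun s : Fin k => s < t)).card = (t : ℕ) := by
  have himg : (Finset.univ.filter (fun s : Fin k => s < t)).image Fin.val
      = Finset.range (t : ℕ) := by
    ext m
    simp only [Finset.mem_image, Finset.mem_filter, Finset.mem_univ, true_and,
      Finset.mem_range, Fin.lt_def]
    constructor
    · rintro ⟨s, hs, rfl⟩; exact hs
    · intro hm; exact ⟨⟨m, lt_trans hm t.isLt⟩, hm, rfl⟩
  have := Finset.card_image_of_injective
    (Finset.univ.filter (fun s : Fin k => s < t)) Fin.val_injective
  rw [himg, Finset.card_range] at this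
  omega

lemma geom_sum_le_pow {n : ℕ} (hn : 2 ≤ n) : ∀ K : ℕ, (∑ t ∈ Finset.range K, n ^ t) ≤ n ^ K := by
  intro K
  induction K with
  | zero => simp
  | succ K ih =>
    rw [Finset.sum_range_succ, pow_succ]
    have h1 : n ^ K * 2 ≤ n ^ K * n := Nat.mul_le_mul_left _ hn
    omega

theorem stmt10 :
    ∃ Cst : ℝ, 0 < Cst ∧
      ∀ (n k : ℕ) (dist : Fin n → Fin n → ℝ) (Z : Fin k → ℝ),
        (∀ i j, dist i j = dist j i) →
        (∀ i, dist i i = 0) →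
        (∀ i j, i ≠ j → 0 < dist i j) →
        (∀ t, Z t ∈ Set.Icc (0:ℝ) 1) →
        ∀ seedFun : ℝ → Fin k → Fin n,
          (∀ α : ℝ, 0 ≤ α → SeedSpec dist α Z (seedFun α)) →
          (({α : ℝ | 0 ≤ α ∧
              ¬ ∃ ε > (0:ℝ), ∀ α' ∈ Set.Ioo (α - ε) (α + ε),
                seedFun α' = seedFun α}.ncard : ℝ))
            ≤ Cst * min ((n : ℝ) ^ (k + 3)) ((n : ℝ) ^ 2 * 2 ^ n) := by
  classical
  refine ⟨2, by norm_num, ?_⟩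
  intro n k dist Z hsymm hd0 hdpos hZ seedFun hseed
  have hRHS0 : (0:ℝ) ≤ 2 * min ((n : ℝ) ^ (k + 3)) ((n : ℝ) ^ 2 * 2 ^ n) := by
    have h1 : (0:ℝ) ≤ (n : ℝ) ^ (k + 3) := by positivity
    have h2 : (0:ℝ) ≤ (n : ℝ) ^ 2 * 2 ^ n := by positivity
    have := le_min h1 h2
    linarith
  set S := {α : ℝ | 0 ≤ α ∧
      ¬ ∃ ε > (0:ℝ), ∀ α' ∈ Set.Ioo (α - ε) (α + ε),
        seedFun α' = seedFun α} with hSdef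
  -- trivial case: `seedFun` takes values in a subsingleton type
  by_cases htriv : ∀ (α β : ℝ), seedFun α = seedFun β
  · have hS : S = ∅ := by
      ext α
      simp only [hSdef, Set.mem_setOf_eq, Set.mem_empty_iff_false, iff_false, not_and]
      intro _
      exact not_not_intro ⟨1, one_pos, fun α' _ => htriv α' α⟩
    rw [hS]
    simpa using hRHS0

  -- hence k ≥ 1 and n ≥ 2
  have hk : 1 ≤ k := by
    by_contra h
    exact htriv (fun α β => funext fun t => absurd t.isLt (by omega))
  have hn1 : 1 ≤ n := by
    by_contra h
    have hn0 : n = 0 := by omega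
    subst hn0
    exact htriv (fun α β => funext fun t => (seedFun α t).elim0)
  have hn : 2 ≤ n := by
    by_contra h
    have hn1' : n = 1 := by omega
    refine htriv fun α β => funext fun t => ?_
    subst hn1'
    exact Subsingleton.elim _ _
  have hdist_nonneg : ∀ v u : Fin n, 0 ≤ dist v u := by
    intro v u
    rcases eq_or_ne v u with rfl | hvu
    · simp [hd0]
    · exact (hdpos v u hvu).le
  have hwgt_nonneg : ∀ (σ : Fin k → Fin n) (β : ℝ) (t : Fin k) (v : Fin n),
      0 ≤ wgt dist σ β t v := by
    intro σ β t v
    unfold wgt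
    split
    · norm_num
    · rw [dminC_eq_dCf]
      exact Real.rpow_nonneg (dCf_nonneg hdist_nonneg _ _) _
  -- distinct centers for positive exponents
  have hinj : ∀ β : ℝ, 0 < β → ∀ s1 s2 : Fin k, s1 < s2 → seedFun β s1 ≠ seedFun β s2 := by
    intro β hβ s1 s2 h12 heqc
    set σ := seedFun β with hσ
    have hspec := hseed β hβ.le s2
    have hs2 : (s2 : ℕ) ≠ 0 := by
      have := (Fin.lt_def.mp h12)
      omega
    have hdle : dCf dist ((Finset.univ.filter (fun s => s < s2)).image σ) (σ s2)
        ≤ dist (σ s2) (σ s1) :=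
      dCf_le hdist_nonneg (Finset.mem_image_of_mem σ (by simp [h12])) _
    have hdz : dCf dist ((Finset.univ.filter (fun s => s < s2)).image σ) (σ s2) = 0 := by
      have h0 : dist (σ s2) (σ s1) = 0 := by rw [← heqc, hd0]
      have := dCf_nonneg hdist_nonneg ((Finset.univ.filter (fun s => s < s2)).image σ) (σ s2)
      linarith [hdle.trans_eq h0]
    have hw0 : wgt dist σ β s2 (σ s2) = 0 := by
      rw [wgt_eq_rpow dist σ hs2, hdz, Real.zero_rpow (ne_of_gt hβ)]
    obtain ⟨h1, h2⟩ := hspec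
    rw [filter_le_eq_insert, Finset.sum_insert (by simp)] at h2
    rw [hw0, zero_add] at h2
    linarith
  -- k ≤ n
  have hkn : k ≤ n := by
    have hif : Function.Injective (seedFun 1) := by
      intro s1 s2 h
      by_contra hne
      rcases lt_or_gt_of_ne hne with hlt | hlt
      · exact hinj 1 one_pos s1 s2 hlt h
      · exact hinj 1 one_pos s2 s1 hlt h.symm
    simpa using Fintype.card_le_of_injective _ hif
  -- parameter space and exponential-sum root sets
  set zval : ℕ → ℝ := fun t => if h : t < k then Z ⟨t, h⟩ else 0 with hzval
  set hfun : Finset (Fin n) × Fin n → ℝ → ℝ := fun p β =>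
    zval p.1.card * ∑ v, dCf dist p.1 v ^ β
      - ∑ v ∈ Finset.univ.filter (fun v => v ≤ p.2), dCf dist p.1 v ^ β with hhfun
  set Rset : Finset (Fin n) × Fin n → Set ℝ := fun p =>
    {β | 0 < β ∧ hfun p β = 0 ∧ ∃ γ, 0 < γ ∧ hfun p γ ≠ 0} with hRset
  have hRp : ∀ p : Finset (Fin n) × Fin n, ∃ F : Finset ℝ, Rset p ⊆ ↑F ∧ F.card ≤ n := by
    intro p
    by_cases hne : ∃ γ : ℝ, 0 < γ ∧ hfun p γ ≠ 0
    case neg => exact ⟨∅, fun x hx => absurd hx.2.2 hne, by simp⟩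
    set Vp := Finset.univ.filter (fun v => 0 < dCf dist p.1 v) with hVp
    set T := Vp.image (fun v => Real.log (dCf dist p.1 v)) with hT
    set e : Fin n → ℝ := fun v => zval p.1.card - if v ≤ p.2 then 1 else 0 with he
    set a : ℝ → ℝ := fun b =>
      ∑ v ∈ Vp.filter (fun v => Real.log (dCf dist p.1 v) = b), e v with ha
    have hrepr : ∀ β : ℝ, 0 < β → hfun p β = ∑ b ∈ T, a b * Real.exp (b * β) := by
      intro β hβ
      have step1 : hfun p β = ∑ v, e v * dCf dist p.1 v ^ β := by
        rw [hhfun]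
        simp only
        rw [Finset.mul_sum, Finset.sum_filter, ← Finset.sum_sub_distrib]
        refine Finset.sum_congr rfl fun v _ => ?_
        by_cases hv : v ≤ p.2 <;> simp [he, hv] <;> ring
      have step2 : (∑ v, e v * dCf dist p.1 v ^ β) = ∑ v ∈ Vp, e v * dCf dist p.1 v ^ β := by
        rw [← Finset.sum_filter_add_sum_filter_not Finset.univ (fun v => 0 < dCf dist p.1 v)]
        rw [← hVp]
        have : ∑ v ∈ Finset.univ.filter (fun v => ¬ 0 < dCf dist p.1 v),
            e v * dCf dist p.1 v ^ β = 0 := by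
          refine Finset.sum_eq_zero fun v hv => ?_
          have h0 : dCf dist p.1 v = 0 := by
            have h1 := (Finset.mem_filter.mp hv).2
            have h2 := dCf_nonneg hdist_nonneg p.1 v
            push_neg at h1
            linarith
          rw [h0, Real.zero_rpow (ne_of_gt hβ), mul_zero]
        rw [this, add_zero]
      have step3 : (∑ v ∈ Vp, e v * dCf dist p.1 v ^ β)
          = ∑ b ∈ T, a b * Real.exp (b * β) := by
        rw [← Finset.sum_fiberwise_of_maps_to
          (fun v hv => Finset.mem_image_of_mem (fun v => Real.log (dCf dist p.1 v)) hv)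
          (fun v => e v * dCf dist p.1 v ^ β)]
        refine Finset.sum_congr rfl fun b hb => ?_
        rw [ha]
        simp only
        rw [Finset.sum_mul]
        refine Finset.sum_congr rfl fun v hv => ?_
        obtain ⟨hvV, hvb⟩ := Finset.mem_filter.mp hv
        have hvpos : 0 < dCf dist p.1 v := (Finset.mem_filter.mp hvV).2
        rw [Real.rpow_def_of_pos hvpos, hvb]
      rw [step1, step2, step3]
    have hTn : T.card ≤ n := by
      calc T.card ≤ Vp.card := Finset.card_image_le
        _ ≤ (Finset.univ : Finset (Fin n)).card := Finset.card_filter_le _ _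
        _ = n := by simp
    have hane : ∃ b ∈ T, a b ≠ 0 := by
      by_contra hall
      push_neg at hall
      obtain ⟨γ, hγ, hγ0⟩ := hne
      refine hγ0 ?_
      rw [hrepr γ hγ]
      exact Finset.sum_eq_zero fun b hb => by rw [hall b hb, zero_mul]
    obtain ⟨F, hF1, hF2⟩ := root_set_bound T a hane
    refine ⟨F, fun x hx => hF1 ?_, hF2.trans hTn⟩
    rw [Set.mem_setOf_eq, ← hrepr x hx.1]
    exact hx.2.1
  choose Ffin hFsub hFcard using hRp
  set P : Finset (Finset (Fin n) × Fin n) :=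
    Finset.univ.filter (fun p => p.1.Nonempty ∧ p.1.card < k) with hP
  set Ftot : Finset ℝ := insert 0 (P.biUnion Ffin) with hFtot
  have hSsub : S ⊆ ↑Ftot := by
    intro α hα
    obtain ⟨hα0, hdisc⟩ := hα
    rcases eq_or_lt_of_le hα0 with heq | hαpos
    · simp [hFtot, ← heq]
    set σ := seedFun α with hσ
    -- pigeonhole: some fixed σ' ≠ σ is attained arbitrarily close to α
    have hex : ∃ σ' : Fin k → Fin n, σ' ≠ σ ∧
        ∀ ε > (0:ℝ), ∃ α', α' ∈ Set.Ioo (α - ε) (α + ε) ∧ 0 < α' ∧ seedFun α' = σ' := by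
      by_contra hcon
      push_neg at hcon
      choose! E hEpos hEprop using hcon
      have hne_f : (Finset.univ.filter (fun σ'' : Fin k → Fin n => σ'' ≠ σ)).Nonempty := by
        have h01 : (⟨0, by omega⟩ : Fin n) ≠ (⟨1, by omega⟩ : Fin n) := by
          simp [Fin.ext_iff]
        set v : Fin n := if σ ⟨0, by omega⟩ = ⟨0, by omega⟩ then ⟨1, by omega⟩
          else ⟨0, by omega⟩ with hv
        refine ⟨Function.update σ ⟨0, by omega⟩ v, ?_⟩
        simp only [Finset.mem_filter, Finset.mem_univ, true_and]
        intro hupd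
        have := congrFun hupd ⟨0, by omega⟩
        rw [Function.update_self] at this
        rw [hv] at this
        split_ifs at this with h
        · rw [h] at this; exact h01 this.symm
        · exact h this.symm
      set ε₀ : ℝ := min α ((Finset.univ.filter (fun σ'' : Fin k → Fin n => σ'' ≠ σ)).inf'
        hne_f E) with hε₀
      have hε₀pos : 0 < ε₀ := by
        rw [hε₀]
        refine lt_min hαpos ?_
        rw [Finset.lt_inf'_iff]
        intro σ'' hσ''
        exact hEpos σ'' (Finset.mem_filter.mp hσ'').2
      push_neg at hdisc
      obtain ⟨α', hIoo, hne'⟩ := hdisc ε₀ hε₀pos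
      have hα'pos : 0 < α' := by
        have h1 : α - ε₀ < α' := hIoo.1
        have h2 : ε₀ ≤ α := min_le_left _ _
        linarith
      set σ' := seedFun α' with hσ'
      have hσ'mem : σ' ∈ Finset.univ.filter (fun σ'' : Fin k → Fin n => σ'' ≠ σ) := by
        simp only [Finset.mem_filter, Finset.mem_univ, true_and]
        exact hne'
      have hEle : ε₀ ≤ E σ' := le_trans (min_le_right _ _) (Finset.inf'_le _ hσ'mem)
      refine hEprop σ' hne' α' ⟨?_, ?_⟩ hα'pos rfl
      · linarith [hIoo.1]
      · linarith [hIoo.2]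
    obtain ⟨σ', hσ'ne, H⟩ := hex
    have hne_t : (Finset.univ.filter (fun t : Fin k => σ t ≠ σ' t)).Nonempty := by
      obtain ⟨t, ht⟩ := Function.ne_iff.mp hσ'ne
      exact ⟨t, by simp [ht.symm]⟩
    set t₀ := (Finset.univ.filter (fun t : Fin k => σ t ≠ σ' t)).min' hne_t with ht₀def
    have ht₀mem := Finset.min'_mem _ hne_t
    have ht₀ : σ t₀ ≠ σ' t₀ := by
      have := (Finset.mem_filter.mp ht₀mem).2
      exact this
    have hpre : ∀ s : Fin k, s < t₀ → σ s = σ' s := by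
      intro s hs
      by_contra h
      exact absurd hs (not_lt.mpr (Finset.min'_le _ s (by simp [h])))
    set C := (Finset.univ.filter (fun s : Fin k => s < t₀)).image σ' with hC
    obtain ⟨α₁, hα₁Ioo, hα₁pos, hα₁seed⟩ := H 1 one_pos
    -- round `t₀` is not round 0
    have ht₀0 : (t₀ : ℕ) ≠ 0 := by
      intro h0
      have hw1 : ∀ (σ'' : Fin k → Fin n) (β : ℝ) (j : Fin n), wgt dist σ'' β t₀ j = 1 := by
        intro σ'' β j; simp [wgt, h0]
      have hsA := hseed α hα0 t₀
      have hsB := hseed α₁ hα₁pos.le t₀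
      rw [← hσ] at hsA
      rw [hα₁seed] at hsB
      simp only [hw1, Finset.sum_const, nsmul_eq_mul, mul_one] at hsA hsB
      have cardle : ∀ i1 i2 : Fin n, i1 < i2 →
          (Finset.univ.filter (fun j => j ≤ i1)).card
            ≤ (Finset.univ.filter (fun j => j < i2)).card := by
        intro i1 i2 h
        apply Finset.card_le_card
        intro j hj
        simp only [Finset.mem_filter, Finset.mem_univ, true_and] at *
        exact lt_of_le_of_lt hj h
      have cardsucc : ∀ i : Fin n, (Finset.univ.filter (fun j => j ≤ i)).card
          = (Finset.univ.filter (fun j => j < i)).card + 1 := by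
        intro i
        rw [filter_le_eq_insert, Finset.card_insert_of_notMem (by simp)]
      rcases lt_trichotomy (σ t₀) (σ' t₀) with h | h | h
      · have hc := cardle _ _ h
        have hc2 := cardsucc (σ t₀)
        have c1 : ((Finset.univ.filter (fun j => j ≤ σ t₀)).card : ℝ)
            ≤ ((Finset.univ.filter (fun j => j < σ' t₀)).card : ℝ) := Nat.cast_le.mpr hc
        have := hsA.2
        have := hsB.1
        linarith
      · exact ht₀ h
      · have hc := cardle _ _ h
        have c1 : ((Finset.univ.filter (fun j => j ≤ σ' t₀)).card : ℝ)
            ≤ ((Finset.univ.filter (fun j => j < σ t₀)).card : ℝ) := Nat.cast_le.mpr hc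
        have := hsB.2
        have := hsA.1
        linarith
    -- weights at round t₀ (for both σ and σ') are given by dCf
    have hwC' : ∀ (β : ℝ) (v : Fin n), wgt dist σ' β t₀ v = dCf dist C v ^ β := by
      intro β v; rw [wgt_eq_rpow dist σ' ht₀0, ← hC]
    have himg_eq : (Finset.univ.filter (fun s : Fin k => s < t₀)).image σ = C := by
      rw [hC]
      exact Finset.image_congr (fun s hs => hpre s (Finset.mem_filter.mp hs).2)
    have hwC : ∀ (β : ℝ) (v : Fin n), wgt dist σ β t₀ v = dCf dist C v ^ β := by
      intro β v; rw [wgt_eq_rpow dist σ ht₀0, himg_eq]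
    -- C is a nonempty set of fewer than k centers
    have hCne : C.Nonempty := by
      refine ⟨σ' ⟨0, by omega⟩, Finset.mem_image_of_mem _ ?_⟩
      simp only [Finset.mem_filter, Finset.mem_univ, true_and, Fin.lt_def]
      exact Nat.pos_of_ne_zero ht₀0
    have hinj' : Set.InjOn σ' ↑(Finset.univ.filter (fun s : Fin k => s < t₀)) := by
      intro s1 _ s2 _ heq
      by_contra hne12
      rw [← hα₁seed] at heq
      rcases lt_or_gt_of_ne hne12 with hlt | hlt
      · exact hinj α₁ hα₁pos s1 s2 hlt heq
      · exact hinj α₁ hα₁pos s2 s1 hlt heq.symm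
    have hCcard : C.card = (t₀ : ℕ) := by
      rw [hC, Finset.card_image_of_injOn hinj', card_filter_lt_fin]
    have hCk : C.card < k := by rw [hCcard]; exact t₀.isLt
    have hzv : zval C.card = Z t₀ := by
      rw [hCcard, hzval]
      simp [t₀.isLt]
    -- strict inequality at α₁
    have hspec₁ := hseed α₁ hα₁pos.le t₀
    rw [hα₁seed] at hspec₁
    have hstrict₁ : hfun (C, σ' t₀) α₁ < 0 := by
      have h2 := hspec₁.2
      simp only [hwC'] at h2
      simp only [hhfun]
      rw [hzv]
      simpa using sub_neg.mpr h2
    -- continuity of rpow in the exponent at α > 0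
    have hcont : ∀ c : ℝ, 0 ≤ c → ContinuousAt (fun β : ℝ => c ^ β) α := by
      intro c hc
      rcases eq_or_lt_of_le hc with hc0 | hcpos
      · have hev : (fun β : ℝ => c ^ β) =ᶠ[nhds α] (fun _ => (0:ℝ)) := by
          filter_upwards [eventually_gt_nhds hαpos] with β hβ
          rw [← hc0, Real.zero_rpow (ne_of_gt hβ)]
        exact ContinuousAt.congr continuousAt_const hev.symm
      · have hfe : (fun β : ℝ => c ^ β) = fun β => Real.exp (Real.log c * β) := by
          funext β; rw [Real.rpow_def_of_pos hcpos]
        rw [hfe]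
        exact (Real.continuous_exp.comp (continuous_const.mul continuous_id)).continuousAt
    -- limits of inequalities that hold near α
    have hlim : ∀ G : ℝ → ℝ, ContinuousAt G α →
        (∀ β : ℝ, 0 < β → seedFun β = σ' → 0 ≤ G β) → 0 ≤ G α := by
      intro G hG hGpos
      by_contra hneg
      push_neg at hneg
      obtain ⟨δ, hδ, hball⟩ := Metric.continuousAt_iff.mp hG (-(G α)) (by linarith)
      obtain ⟨α', hIoo, hpos', hseed'⟩ := H δ hδ
      have hdd : Dist.dist α' α < δ := by
        rw [Real.dist_eq]
        exact abs_lt.mpr ⟨by linarith [hIoo.1], by linarith [hIoo.2]⟩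
      have hb := hball hdd
      rw [Real.dist_eq] at hb
      have h2 := abs_lt.mp hb
      have h3 := hGpos α' hpos' hseed'
      linarith [h2.1, h2.2]
    have hcontSum : ∀ A : Finset (Fin n),
        ContinuousAt (fun β : ℝ => ∑ v ∈ A, dCf dist C v ^ β) α := by
      intro A
      apply tendsto_finset_sum
      intro v _
      exact hcont _ (dCf_nonneg hdist_nonneg _ _)
    have hF1 : 0 ≤ Z t₀ * (∑ v, dCf dist C v ^ α)
        - ∑ v ∈ Finset.univ.filter (fun v => v < σ' t₀), dCf dist C v ^ α := by
      apply hlim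
      · exact ContinuousAt.sub (continuousAt_const.mul (hcontSum Finset.univ)) (hcontSum _)
      · intro β hβ hs
        have hsp := hseed β hβ.le t₀
        rw [hs] at hsp
        have h1 := hsp.1
        simp only [hwC'] at h1
        linarith
    have hF2 : 0 ≤ (∑ v ∈ Finset.univ.filter (fun v => v ≤ σ' t₀), dCf dist C v ^ α)
        - Z t₀ * (∑ v, dCf dist C v ^ α) := by
      apply hlim
      · exact ContinuousAt.sub (hcontSum _) (continuousAt_const.mul (hcontSum Finset.univ))
      · intro β hβ hs
        have hsp := hseed β hβ.le t₀
        rw [hs] at hsp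
        have h2 := hsp.2
        simp only [hwC'] at h2
        linarith
    -- SeedSpec for σ at α, in dCf form
    have hspecα := hseed α hα0 t₀
    rw [← hσ] at hspecα
    have hA := hspecα.1
    have hB := hspecα.2
    simp only [hwC] at hA hB
    -- monotonicity of partial sums
    have hmono : ∀ i1 i2 : Fin n, i1 < i2 →
        (∑ v ∈ Finset.univ.filter (fun v => v ≤ i1), dCf dist C v ^ α)
          ≤ ∑ v ∈ Finset.univ.filter (fun v => v < i2), dCf dist C v ^ α := by
      intro i1 i2 h
      apply Finset.sum_le_sum_of_subset_of_nonneg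
      · intro j hj
        simp only [Finset.mem_filter, Finset.mem_univ, true_and] at *
        exact lt_of_le_of_lt hj h
      · intro v _ _
        exact Real.rpow_nonneg (dCf_nonneg hdist_nonneg _ _) _
    -- the equality at α
    have heqz : hfun (C, σ' t₀) α = 0 := by
      simp only [hhfun]
      rw [hzv]
      rcases lt_trichotomy (σ' t₀) (σ t₀) with h | h | h
      · have hm := hmono (σ' t₀) (σ t₀) h
        linarith
      · exact absurd h.symm ht₀
      · exfalso
        have hm := hmono (σ t₀) (σ' t₀) h
        linarith
    have hmem : α ∈ Rset (C, σ' t₀) := by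
      simp only [hRset, Set.mem_setOf_eq]
      exact ⟨hαpos, heqz, α₁, hα₁pos, ne_of_lt hstrict₁⟩
    have hPmem : (C, σ' t₀) ∈ P := by
      rw [hP]
      simp only [Finset.mem_filter, Finset.mem_univ, true_and]
      exact ⟨hCne, hCk⟩
    rw [hFtot, Finset.coe_insert]
    exact Set.mem_insert_iff.mpr (Or.inr (by
      rw [Finset.mem_coe]
      exact Finset.mem_biUnion.mpr ⟨_, hPmem, hFsub _ hmem⟩))
  have h1 : S.ncard ≤ Ftot.card := by
    have := Set.ncard_le_ncard hSsub Ftot.finite_toSet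
    rwa [Set.ncard_coe_finset] at this
  have h2 : Ftot.card ≤ P.card * n + 1 := by
    calc Ftot.card ≤ (P.biUnion Ffin).card + 1 := Finset.card_insert_le _ _
      _ ≤ (∑ p ∈ P, (Ffin p).card) + 1 := Nat.add_le_add_right Finset.card_biUnion_le 1
      _ ≤ (∑ _p ∈ P, n) + 1 := Nat.add_le_add_right
          (Finset.sum_le_sum fun p _ => hFcard p) 1
      _ = P.card * n + 1 := by rw [Finset.sum_const, smul_eq_mul]
  have hP1 : P.card ≤ 2 ^ n * n := by
    calc P.card ≤ Fintype.card (Finset (Fin n) × Fin n) := by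
          rw [hP, ← Finset.card_univ]
          exact Finset.card_filter_le _ _
      _ = 2 ^ n * n := by simp [Fintype.card_finset]
  have hP2 : P.card ≤ n ^ k * n := by
    have hsub : P ⊆ ((Finset.range k).biUnion
        (fun t => Finset.powersetCard t (Finset.univ : Finset (Fin n)))) ×ˢ Finset.univ := by
      intro p hp
      obtain ⟨-, _hne, hck⟩ := Finset.mem_filter.mp hp
      refine Finset.mem_product.mpr ⟨?_, Finset.mem_univ _⟩
      exact Finset.mem_biUnion.mpr ⟨p.1.card, Finset.mem_range.mpr hck,
        Finset.mem_powersetCard.mpr ⟨Finset.subset_univ _, rfl⟩⟩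
    calc P.card ≤ _ := Finset.card_le_card hsub
      _ = ((Finset.range k).biUnion fun t =>
            Finset.powersetCard t (Finset.univ : Finset (Fin n))).card * n := by
          rw [Finset.card_product]; simp
      _ ≤ (∑ t ∈ Finset.range k,
            (Finset.powersetCard t (Finset.univ : Finset (Fin n))).card) * n :=
          Nat.mul_le_mul_right _ Finset.card_biUnion_le
      _ ≤ (∑ t ∈ Finset.range k, n ^ t) * n := by
          refine Nat.mul_le_mul_right _ (Finset.sum_le_sum fun t _ => ?_)
          rw [Finset.card_powersetCard]
          simpa using Nat.choose_le_pow n t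
      _ ≤ n ^ k * n := Nat.mul_le_mul_right _ (geom_sum_le_pow hn k)
  rw [mul_min_of_nonneg _ _ (by norm_num : (0:ℝ) ≤ 2)]
  refine le_min ?_ ?_
  · have hnat : S.ncard ≤ 2 * n ^ (k + 3) := by
      have hX : S.ncard ≤ n ^ k * n * n + 1 :=
        h1.trans (h2.trans (Nat.add_le_add_right (Nat.mul_le_mul_right n hP2) 1))
      have e1 : n ^ k * n * n = n ^ (k + 2) := by ring
      have e2 : n ^ (k + 2) ≤ n ^ (k + 3) := Nat.pow_le_pow_right (by omega) (by omega)
      have e3 : 1 ≤ n ^ (k + 3) := Nat.one_le_pow _ _ (by omega)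
      omega
    calc (S.ncard : ℝ) ≤ ((2 * n ^ (k + 3) : ℕ) : ℝ) := by exact_mod_cast hnat
      _ = 2 * (n : ℝ) ^ (k + 3) := by push_cast; ring
  · have hnat : S.ncard ≤ 2 * (n ^ 2 * 2 ^ n) := by
      have hX : S.ncard ≤ 2 ^ n * n * n + 1 :=
        h1.trans (h2.trans (Nat.add_le_add_right (Nat.mul_le_mul_right n hP1) 1))
      have e1 : 2 ^ n * n * n = n ^ 2 * 2 ^ n := by ring
      have h2n : 1 ≤ 2 ^ n := Nat.one_le_two_pow
      have hnn : 1 ≤ n ^ 2 := Nat.one_le_pow _ _ (by omega)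
      have e3 : 1 ≤ n ^ 2 * 2 ^ n := by
        calc 1 = 1 * 1 := by ring
          _ ≤ n ^ 2 * 2 ^ n := Nat.mul_le_mul hnn h2n
      omega
    calc (S.ncard : ℝ) ≤ ((2 * (n ^ 2 * 2 ^ n) : ℕ) : ℝ) := by exact_mod_cast hnat
      _ = 2 * ((n : ℝ) ^ 2 * 2 ^ n) := by push_cast; ring
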